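/- Let (Ω, Σ, M) be a POVM on a separable Hilbert space H, and let {x_j}_{j≥1} be a countable dense subset of the unit ball of H. Define μ(E) = Σ_j 2^{-j} ⟨M(E)x_j, x_j⟩. Then μ is a finite (hence σ-finite) measure on Σ, and every complex measure μ_{x,y}(E) = ⟨M(E)x, y⟩ (x, y ∈ H) is absolutely continuous with respect to μ. -/

import Mathlib

open MeasureTheory
open scoped InnerProductSpace ENNReal

/-- A positive operator-valued measure (POVM). -/
structure POVM (Ω : Type*) [MeasurableSpace Ω] (H : Type*)
    [NormedAddCommGroup H] [InnerProductSpace ℂ H] [CompleteSpace H] where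
  toFun : Set Ω → H →L[ℂ] H
  isPositive : ∀ E : Set Ω, MeasurableSet E → (toFun E).IsPositive
  empty : toFun ∅ = 0
  weakly_additive : ∀ E : ℕ → Set Ω, (∀ i, MeasurableSet (E i)) →
    Pairwise (Function.onFun Disjoint E) → ∀ x y : H,
      HasSum (fun i => ⟪toFun (E i) x, y⟫_ℂ) ⟪toFun (⋃ i, E i) x, y⟫_ℂ

section aux

variable {H : Type*} [NormedAddCommGroup H] [InnerProductSpace ℂ H] [CompleteSpace H]

/-- A positive operator whose quadratic form vanishes on a dense subset of the unit ball
is zero. -/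
lemma pos_op_eq_zero_of_dense (T : H →L[ℂ] H) (hT : T.IsPositive)
    (xs : ℕ → H) (hdense : ∀ z : H, ‖z‖ ≤ 1 → z ∈ closure (Set.range xs))
    (hvanish : ∀ j, (⟪T (xs j), xs j⟫_ℂ).re = 0) : T = 0 := by
  -- quadratic form vanishes on the closed unit ball by continuity
  have hcont : Continuous fun z : H => (⟪T z, z⟫_ℂ).re := by
    exact (Complex.continuous_re.comp ((continuous_inner).comp
      ((T.continuous.prodMk continuous_id)))).congr fun z => rfl
  have hball : ∀ z : H, ‖z‖ ≤ 1 → (⟪T z, z⟫_ℂ).re = 0 := by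
    intro z hz
    have hclosed : IsClosed {w : H | (⟪T w, w⟫_ℂ).re = 0} :=
      isClosed_eq hcont continuous_const
    have hsub : Set.range xs ⊆ {w : H | (⟪T w, w⟫_ℂ).re = 0} := by
      rintro _ ⟨j, rfl⟩; exact hvanish j
    have hsub' := closure_mono hsub
    rw [hclosed.closure_eq] at hsub'
    exact hsub' (hdense z hz)
  -- hence vanishes everywhere by scaling
  have hall : ∀ z : H, (⟪T z, z⟫_ℂ).re = 0 := by
    intro z
    rcases eq_or_ne z 0 with rfl | hz
    · simp
    · have hnz : (0 : ℝ) < ‖z‖ := norm_pos_iff.mpr hz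
      set u : H := (‖z‖⁻¹ : ℂ) • z with hu
      have hun : ‖u‖ ≤ 1 := by
        rw [hu, norm_smul]
        simp [hnz.le, abs_of_nonneg (inv_nonneg.mpr hnz.le), inv_mul_cancel₀ hnz.ne']
      have h0 := hball u hun
      rw [hu, T.map_smul, inner_smul_left, inner_smul_right] at h0
      have hconj : (starRingEnd ℂ) ((‖z‖ : ℂ)⁻¹) = (‖z‖ : ℂ)⁻¹ := by
        rw [← Complex.ofReal_inv, Complex.conj_ofReal]
      rw [hconj, ← mul_assoc, ← Complex.ofReal_inv, ← Complex.ofReal_mul,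
        Complex.re_ofReal_mul] at h0
      have h0' : (‖z‖⁻¹ * ‖z‖⁻¹) * (⟪T z, z⟫_ℂ).re = 0 := h0
      have hpos : (0 : ℝ) < ‖z‖⁻¹ * ‖z‖⁻¹ := by positivity
      exact (mul_eq_zero.mp h0').resolve_left hpos.ne'
  -- self-adjointness gives vanishing of the imaginary part, hence the full form
  have hform : ∀ z : H, ⟪T z, z⟫_ℂ = 0 := by
    intro z
    have hsa : ⟪T z, z⟫_ℂ = (starRingEnd ℂ) ⟪T z, z⟫_ℂ := by
      have := hT.isSelfAdjoint
      rw [ContinuousLinearMap.isSelfAdjoint_iff_isSymmetric] at this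
      calc ⟪T z, z⟫_ℂ = ⟪z, T z⟫_ℂ := (this z z)
        _ = (starRingEnd ℂ) ⟪T z, z⟫_ℂ := (inner_conj_symm _ _).symm
    have him : (⟪T z, z⟫_ℂ).im = 0 := by
      have := congrArg Complex.im hsa
      simp only [Complex.conj_im] at this
      linarith
    exact Complex.ext (hall z) him
  have := (inner_map_self_eq_zero (T : H →ₗ[ℂ] H)).mp fun z => hform z
  ext z
  exact congrFun (congrArg DFunLike.coe this) z

end aux

/-- If `{x_j}` is a countable dense subset of the unit ball of a separable Hilbert space,
then `μ(E) = ∑_j 2^{-(j+1)} ⟪M(E) x_j, x_j⟫` defines a finite measure on `Σ`, and every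
complex measure `μ_{x,y}(E) = ⟪M(E)x, y⟫` is absolutely continuous with respect to `μ`. -/
theorem povm_dominating_measure
    {Ω : Type*} [MeasurableSpace Ω]
    {H : Type*} [NormedAddCommGroup H] [InnerProductSpace ℂ H] [CompleteSpace H]
    [TopologicalSpace.SeparableSpace H]
    (M : POVM Ω H)
    (xs : ℕ → H) (hball : ∀ j, ‖xs j‖ ≤ 1)
    (hdense : ∀ z : H, ‖z‖ ≤ 1 → z ∈ closure (Set.range xs)) :
    ∃ μ : Measure Ω,
      (∀ E : Set Ω, MeasurableSet E →
        μ E = ∑' j : ℕ, ENNReal.ofReal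
          ((2 : ℝ)⁻¹ ^ (j + 1) * (⟪M.toFun E (xs j), xs j⟫_ℂ).re)) ∧
      IsFiniteMeasure μ ∧
      ∀ (x y : H) (E : Set Ω), MeasurableSet E → μ E = 0 → ⟪M.toFun E x, y⟫_ℂ = 0 := by
  classical
  -- the candidate set function
  set m : ∀ s : Set Ω, MeasurableSet s → ℝ≥0∞ := fun E _ =>
    ∑' j : ℕ, ENNReal.ofReal ((2 : ℝ)⁻¹ ^ (j + 1) * (⟪M.toFun E (xs j), xs j⟫_ℂ).re)
    with hm
  have hre_nonneg : ∀ (E : Set Ω), MeasurableSet E → ∀ x : H,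
      0 ≤ (⟪M.toFun E x, x⟫_ℂ).re := by
    intro E hE x
    have := (M.isPositive E hE).2 x
    simpa [ContinuousLinearMap.reApplyInnerSelf] using this
  have hm0 : m ∅ MeasurableSet.empty = 0 := by
    simp [hm, M.empty]
  have hmU : ∀ ⦃f : ℕ → Set Ω⦄ (h : ∀ i, MeasurableSet (f i)),
      Pairwise (Function.onFun Disjoint f) →
      m (⋃ i, f i) (MeasurableSet.iUnion h) = ∑' i, m (f i) (h i) := by
    intro f hf hd
    simp only [hm]
    rw [ENNReal.tsum_comm (f := fun i j => ENNReal.ofReal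
      ((2 : ℝ)⁻¹ ^ (j + 1) * (⟪M.toFun (f i) (xs j), xs j⟫_ℂ).re))]
    congr 1
    funext j
    have hsum : HasSum (fun i => (2 : ℝ)⁻¹ ^ (j + 1) * (⟪M.toFun (f i) (xs j), xs j⟫_ℂ).re)
        ((2 : ℝ)⁻¹ ^ (j + 1) * (⟪M.toFun (⋃ i, f i) (xs j), xs j⟫_ℂ).re) :=
      ((M.weakly_additive f hf hd (xs j) (xs j)).mapL Complex.reCLM).mul_left _
    rw [← hsum.tsum_eq,
      ENNReal.ofReal_tsum_of_nonneg
        (fun i => mul_nonneg (by positivity) (hre_nonneg (f i) (hf i) (xs j)))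
        hsum.summable]
  refine ⟨Measure.ofMeasurable m hm0 hmU, fun E hE => Measure.ofMeasurable_apply E hE, ?_, ?_⟩
  · -- finiteness
    constructor
    rw [Measure.ofMeasurable_apply _ MeasurableSet.univ]
    set C : ℝ := ‖M.toFun Set.univ‖ with hC
    have hbound : ∀ j : ℕ,
        ENNReal.ofReal ((2 : ℝ)⁻¹ ^ (j + 1) * (⟪M.toFun Set.univ (xs j), xs j⟫_ℂ).re)
          ≤ ENNReal.ofReal ((2 : ℝ)⁻¹ ^ (j + 1) * C) := by
      intro j
      apply ENNReal.ofReal_le_ofReal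
      apply mul_le_mul_of_nonneg_left _ (by positivity)
      calc (⟪M.toFun Set.univ (xs j), xs j⟫_ℂ).re
          ≤ ‖⟪M.toFun Set.univ (xs j), xs j⟫_ℂ‖ := Complex.re_le_norm _
        _ ≤ ‖M.toFun Set.univ (xs j)‖ * ‖xs j‖ := norm_inner_le_norm _ _
        _ ≤ (‖M.toFun Set.univ‖ * ‖xs j‖) * ‖xs j‖ := by
            gcongr; exact (M.toFun Set.univ).le_opNorm _
        _ ≤ (C * 1) * 1 := by
            rw [hC]
            gcongr <;> exact hball j
        _ = C := by ring
    calc (∑' j : ℕ, ENNReal.ofReal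
            ((2 : ℝ)⁻¹ ^ (j + 1) * (⟪M.toFun Set.univ (xs j), xs j⟫_ℂ).re))
        ≤ ∑' j : ℕ, ENNReal.ofReal ((2 : ℝ)⁻¹ ^ (j + 1) * C) := ENNReal.tsum_le_tsum hbound
      _ = ∑' j : ℕ, (2 : ℝ≥0∞)⁻¹ ^ (j + 1) * ENNReal.ofReal C := by
          congr 1; funext j
          rw [ENNReal.ofReal_mul (by positivity), ENNReal.ofReal_pow (by norm_num)]
          congr 2
          rw [ENNReal.ofReal_inv_of_pos (by norm_num)]
          norm_num
      _ = (∑' j : ℕ, (2 : ℝ≥0∞)⁻¹ ^ (j + 1)) * ENNReal.ofReal C := ENNReal.tsum_mul_right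
      _ < ⊤ := by
          apply ENNReal.mul_lt_top _ ENNReal.ofReal_lt_top
          have hgeo : (∑' j : ℕ, (2 : ℝ≥0∞)⁻¹ ^ (j + 1))
              = (1 - 2⁻¹)⁻¹ * 2⁻¹ := by
            simp_rw [pow_succ]
            rw [ENNReal.tsum_mul_right, ENNReal.tsum_geometric]
          rw [hgeo]
          apply ENNReal.mul_lt_top
          · exact ENNReal.inv_lt_top.mpr (tsub_pos_iff_lt.mpr
              (ENNReal.inv_lt_one.mpr (by norm_num)))
          · exact ENNReal.inv_lt_top.mpr (by norm_num)
  · -- absolute continuity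
    intro x y E hE hμE
    rw [Measure.ofMeasurable_apply E hE] at hμE
    have hterm : ∀ j : ℕ,
        ENNReal.ofReal ((2 : ℝ)⁻¹ ^ (j + 1) * (⟪M.toFun E (xs j), xs j⟫_ℂ).re) = 0 :=
      fun j => (ENNReal.tsum_eq_zero.mp hμE) j
    have hvanish : ∀ j, (⟪M.toFun E (xs j), xs j⟫_ℂ).re = 0 := by
      intro j
      have h := hterm j
      rw [ENNReal.ofReal_eq_zero] at h
      have h1 : (2 : ℝ)⁻¹ ^ (j + 1) * (⟪M.toFun E (xs j), xs j⟫_ℂ).re = 0 :=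
        le_antisymm h (mul_nonneg (by positivity) (hre_nonneg E hE (xs j)))
      have hpos : (0 : ℝ) < (2 : ℝ)⁻¹ ^ (j + 1) := by positivity
      exact (mul_eq_zero.mp h1).resolve_left hpos.ne'
    have hT0 : M.toFun E = 0 :=
      pos_op_eq_zero_of_dense (M.toFun E) (M.isPositive E hE) xs hdense hvanish
    rw [hT0]
    simp
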